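/- Let E be a real vector space and W ⊆ E a subspace. Suppose ω is an alternating r-linear form on E such that ω(ξ₀,…,ξ_k, v_{k+2},…,v_r) = 0 whenever ξ₀,…,ξ_k ∈ W (i.e. ω is annihilated by contraction with any k+1 vectors from W; this is vacuous if r ≤ k), and suppose σ is an alternating s-linear form on E annihilated by contraction with any l+1 vectors from W. Then the exterior (wedge) product ω ∧ σ, an alternating (r+s)-linear form on E, is annihilated by contraction with any k+l+1 vectors from W: (ω∧σ)(ξ₀,…,ξ_{k+l}, v_{k+l+2},…,v_{r+s}) = 0 whenever ξ₀,…,ξ_{k+l} ∈ W. (This is the compatibility of the Cartan filtration with wedge products: F_k ∧ F_l ⊆ F_{k+l}.) -/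
import Mathlib


open scoped TensorProduct

/-- The wedge (exterior) product of two real-valued alternating forms: the
antisymmetrized shuffle sum of their tensor product, realized via `domCoprod`
(shuffle sum with values in `ℝ ⊗ ℝ`), multiplication `ℝ ⊗ ℝ ≃ ℝ`, and the
identification `Fin r ⊕ Fin s ≃ Fin (r + s)`. -/
noncomputable def wedgeForm {E : Type*} [AddCommGroup E] [Module ℝ E] {r s : ℕ}
    (ω : E [⋀^Fin r]→ₗ[ℝ] ℝ) (σ : E [⋀^Fin s]→ₗ[ℝ] ℝ) :
    E [⋀^Fin (r + s)]→ₗ[ℝ] ℝ :=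
  AlternatingMap.domDomCongr finSumFinEquiv
    ((TensorProduct.lid ℝ ℝ).toLinearMap.compAlternatingMap
      (AlternatingMap.domCoprod ω σ))

/-- An alternating `r`-form `ω` on `E` is annihilated by contraction with any
`k+1` vectors from the subspace `W` if either `r ≤ k` (the vacuous case: one
cannot insert `k+1` vectors) or `ω` vanishes whenever its first `k+1` arguments
lie in `W` (equivalently, by alternation, whenever any `k+1` arguments lie in
`W`).  This is membership in the Cartan filtration `F_k`. -/
def AnnByContraction {E : Type*} [AddCommGroup E] [Module ℝ E]
    (W : Submodule ℝ E) (k : ℕ) {r : ℕ} (ω : E [⋀^Fin r]→ₗ[ℝ] ℝ) : Prop :=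
  r ≤ k ∨ ∀ v : Fin r → E, (∀ i : Fin r, (i : ℕ) ≤ k → v i ∈ W) → ω v = 0

/-- Compatibility of the Cartan filtration with wedge products:
`F_k ∧ F_l ⊆ F_{k+l}`.  If `ω` is annihilated by contraction with any `k+1`
vectors from `W` and `σ` is annihilated by contraction with any `l+1` vectors
from `W`, then `ω ∧ σ` is annihilated by contraction with any `k+l+1` vectors
from `W`. -/

lemma card_filter_le_aux (n k : ℕ) (h : k + 1 ≤ n) :
    (Finset.univ.filter (fun i : Fin n => (i : ℕ) ≤ k)).card = k + 1 := by
  have : (Finset.univ.filter (fun i : Fin n => (i : ℕ) ≤ k)) =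
      Finset.map (Fin.castLEEmb h) Finset.univ := by
    ext j
    simp only [Finset.mem_filter, Finset.mem_univ, true_and, Finset.mem_map]
    constructor
    · intro hj
      exact ⟨⟨j, by omega⟩, rfl⟩
    · rintro ⟨i, rfl⟩
      simpa using Nat.lt_succ_iff.mp i.isLt
  rw [this]
  simp

lemma vanish_of_card {E : Type*} [AddCommGroup E] [Module ℝ E]
    (W : Submodule ℝ E) (k : ℕ) {r : ℕ} (ω : E [⋀^Fin r]→ₗ[ℝ] ℝ)
    (h : ∀ v : Fin r → E, (∀ i : Fin r, (i : ℕ) ≤ k → v i ∈ W) → ω v = 0)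
    (u : Fin r → E) (T : Finset (Fin r)) (hT : k + 1 ≤ T.card)
    (hTW : ∀ i ∈ T, u i ∈ W) : ω u = 0 := by
  classical
  have hkr : k + 1 ≤ r := hT.trans (by simpa using T.card_le_univ)
  obtain ⟨T', hT'sub, hT'card⟩ := Finset.exists_subset_card_eq hT
  have hcard : Fintype.card {i : Fin r // (i : ℕ) ≤ k} = Fintype.card {i : Fin r // i ∈ T'} := by
    rw [Fintype.card_subtype, Fintype.card_coe, card_filter_le_aux r k hkr, hT'card]
  let e : {i : Fin r // (i : ℕ) ≤ k} ≃ {i : Fin r // i ∈ T'} := Fintype.equivOfCardEq hcard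
  let π : Equiv.Perm (Fin r) := e.extendSubtype
  have h0 : ω (u ∘ π) = 0 := by
    apply h
    intro i hi
    have : π i ∈ T' := e.extendSubtype_mem i hi
    exact hTW _ (hT'sub this)
  rw [ω.map_perm u π] at h0
  rcases Int.units_eq_one_or (Equiv.Perm.sign π) with hs | hs <;>
    simp [hs] at h0 <;> simpa using h0

set_option maxHeartbeats 1000000 in
set_option synthInstance.maxHeartbeats 200000 in
theorem stmt_16' {E : Type*} [AddCommGroup E] [Module ℝ E] (W : Submodule ℝ E)
    {r s : ℕ} (k l : ℕ) (ω : E [⋀^Fin r]→ₗ[ℝ] ℝ) (σ : E [⋀^Fin s]→ₗ[ℝ] ℝ)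
    (hω : r ≤ k ∨ ∀ v : Fin r → E, (∀ i : Fin r, (i : ℕ) ≤ k → v i ∈ W) → ω v = 0)
    (hσ : s ≤ l ∨ ∀ v : Fin s → E, (∀ i : Fin s, (i : ℕ) ≤ l → v i ∈ W) → σ v = 0) :
    (r + s ≤ k + l) ∨ ∀ v : Fin (r + s) → E,
      (∀ i : Fin (r + s), (i : ℕ) ≤ k + l → v i ∈ W) → wedgeForm ω σ v = 0 := by
  classical
  rcases le_or_gt (r + s) (k + l) with hrs | hrs
  · exact Or.inl hrs
  right
  intro v hv
  have hS : k + l + 1 ≤ r + s := hrs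
  have hwedge : wedgeForm ω σ v =
      ∑ p : Equiv.Perm.ModSumCongr (Fin r) (Fin s),
        (TensorProduct.lid ℝ ℝ)
          (AlternatingMap.domCoprod.summand ω σ p (fun i => v (finSumFinEquiv i))) := by
    rw [wedgeForm]
    simp only [AlternatingMap.domDomCongr_apply, LinearMap.compAlternatingMap_apply,
      LinearEquiv.coe_coe]
    have h1 : (AlternatingMap.domCoprod ω σ) (v ∘ finSumFinEquiv)
        = ∑ p : Equiv.Perm.ModSumCongr (Fin r) (Fin s),
            AlternatingMap.domCoprod.summand ω σ p (v ∘ finSumFinEquiv) := by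
      rw [← MultilinearMap.sum_apply, ← AlternatingMap.domCoprod_coe]
      rfl
    rw [h1, map_sum (TensorProduct.lid ℝ ℝ)]
    rfl
  rw [hwedge]
  apply Finset.sum_eq_zero
  intro p _
  induction p using Quotient.inductionOn' with
  | h π =>
  rw [AlternatingMap.domCoprod.summand_mk'']
  set g : (Fin r ⊕ Fin s) ≃ Fin (r + s) := π.trans finSumFinEquiv with hg
  suffices hz : (ω fun i => v (g (Sum.inl i))) ⊗ₜ[ℝ] (σ fun i => v (g (Sum.inr i)))
      = (0 : ℝ ⊗[ℝ] ℝ) by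
    have : (MultilinearMap.domCoprod (ω : MultilinearMap ℝ (fun _ : Fin r => E) ℝ)
        (σ : MultilinearMap ℝ (fun _ : Fin s => E) ℝ)).domDomCongr π
        (fun i => v (finSumFinEquiv i)) = 0 := by
      rw [MultilinearMap.domDomCongr_apply, MultilinearMap.domCoprod_apply]
      exact hz
    rw [MultilinearMap.smul_apply, this, smul_zero]
    exact map_zero (TensorProduct.lid ℝ ℝ)
  set S : Finset (Fin (r + s)) := Finset.univ.filter (fun j => (j : ℕ) ≤ k + l) with hSdef
  have hcardS : S.card = k + l + 1 := card_filter_le_aux _ _ hS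
  have hsplit : (S.filter (fun j => (g.symm j).isLeft)).card
      + (S.filter (fun j => ¬ (g.symm j).isLeft)).card = k + l + 1 := by
    rw [Finset.card_filter_add_card_filter_not, hcardS]
  rcases le_or_gt (k + 1) (S.filter (fun j => (g.symm j).isLeft)).card with hL | hL
  · -- the ω factor vanishes
    set T : Finset (Fin r) := Finset.univ.filter (fun i => g (Sum.inl i) ∈ S) with hT
    have himg : S.filter (fun j => (g.symm j).isLeft) = T.image (fun i => g (Sum.inl i)) := by
      ext j
      simp only [Finset.mem_filter, Finset.mem_image, hT, Finset.mem_univ, true_and]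
      constructor
      · rintro ⟨hjS, hleft⟩
        obtain ⟨i, hi⟩ := Sum.isLeft_iff.mp hleft
        refine ⟨i, ?_, ?_⟩
        · rw [← hi, Equiv.apply_symm_apply]; exact hjS
        · rw [← hi, Equiv.apply_symm_apply]
      · rintro ⟨i, hiS, rfl⟩
        exact ⟨hiS, by simp⟩
    have hTcard : k + 1 ≤ T.card := by
      rwa [himg, Finset.card_image_of_injective T
        (show Function.Injective (fun i : Fin r => g (Sum.inl i)) from
          fun a b hab => Sum.inl_injective (g.injective hab))] at hL
    have hωne : ∀ v : Fin r → E, (∀ i : Fin r, (i : ℕ) ≤ k → v i ∈ W) → ω v = 0 := by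
      rcases hω with h | h
      · exfalso
        have hle : T.card ≤ r := by simpa using T.card_le_univ
        omega
      · exact h
    have : (ω fun i => v (g (Sum.inl i))) = 0 := by
      apply vanish_of_card W k ω hωne _ T hTcard
      intro i hi
      have hiS : g (Sum.inl i) ∈ S := by
        simpa [hT] using hi
      apply hv
      simpa [hSdef] using hiS
    rw [this, TensorProduct.zero_tmul]
  · -- the σ factor vanishes
    have hR : l + 1 ≤ (S.filter (fun j => ¬ (g.symm j).isLeft)).card := by omega
    set T : Finset (Fin s) := Finset.univ.filter (fun i => g (Sum.inr i) ∈ S) with hT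
    have himg : S.filter (fun j => ¬ (g.symm j).isLeft) = T.image (fun i => g (Sum.inr i)) := by
      ext j
      simp only [Finset.mem_filter, Finset.mem_image, hT, Finset.mem_univ, true_and]
      constructor
      · rintro ⟨hjS, hright⟩
        obtain ⟨i, hi⟩ := Sum.isRight_iff.mp (Sum.not_isLeft.mp hright)
        refine ⟨i, ?_, ?_⟩
        · rw [← hi, Equiv.apply_symm_apply]; exact hjS
        · rw [← hi, Equiv.apply_symm_apply]
      · rintro ⟨i, hiS, rfl⟩
        exact ⟨hiS, by simp⟩
    have hTcard : l + 1 ≤ T.card := by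
      rwa [himg, Finset.card_image_of_injective T
        (show Function.Injective (fun i : Fin s => g (Sum.inr i)) from
          fun a b hab => Sum.inr_injective (g.injective hab))] at hR
    have hσne : ∀ v : Fin s → E, (∀ i : Fin s, (i : ℕ) ≤ l → v i ∈ W) → σ v = 0 := by
      rcases hσ with h | h
      · exfalso
        have hle : T.card ≤ s := by simpa using T.card_le_univ
        omega
      · exact h
    have : (σ fun i => v (g (Sum.inr i))) = 0 := by
      apply vanish_of_card W l σ hσne _ T hTcard
      intro i hi
      have hiS : g (Sum.inr i) ∈ S := by
        simpa [hT] using hi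
      apply hv
      simpa [hSdef] using hiS
    rw [this, TensorProduct.tmul_zero]

theorem stmt_16 {E : Type*} [AddCommGroup E] [Module ℝ E] (W : Submodule ℝ E)
    {r s : ℕ} (k l : ℕ) (ω : E [⋀^Fin r]→ₗ[ℝ] ℝ) (σ : E [⋀^Fin s]→ₗ[ℝ] ℝ)
    (hω : AnnByContraction W k ω) (hσ : AnnByContraction W l σ) :
    AnnByContraction W (k + l) (wedgeForm ω σ) :=
  stmt_16' W k l ω σ hω hσ
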